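/- For any arrangement of pairwise non-overlapping unit disks in the plane, a single unit disk can non-trivially intersect (overlap with positive area) at most 5 of them. -/

import Mathlib

open Real

/-- Law-of-cosines style bound. -/
lemma key_cos {z w : ℂ} (hz : z ≠ 0) (hw : w ≠ 0)
    (hz2 : ‖z‖ < 2) (hw2 : ‖w‖ < 2)
    (hd : 2 ≤ ‖z - w‖) :
    Real.cos (z.arg - w.arg) < 1/2 := by
  have hr : 0 < ‖z‖ := norm_pos_iff.mpr hz
  have hs : 0 < ‖w‖ := norm_pos_iff.mpr hw
  have hzsq : ‖z‖^2 = z.re^2 + z.im^2 := by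
    rw [Complex.sq_norm, Complex.normSq_apply]; ring
  have hwsq : ‖w‖^2 = w.re^2 + w.im^2 := by
    rw [Complex.sq_norm, Complex.normSq_apply]; ring
  have hdsq : (4:ℝ) ≤ (z.re - w.re)^2 + (z.im - w.im)^2 := by
    have : (2:ℝ)^2 ≤ ‖z - w‖^2 := by
      apply pow_le_pow_left₀ (by norm_num) hd
    rw [Complex.sq_norm, Complex.normSq_apply, Complex.sub_re, Complex.sub_im] at this
    nlinarith [this]
  rw [Real.cos_sub, Complex.cos_arg hz, Complex.cos_arg hw, Complex.sin_arg,
    Complex.sin_arg]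
  rw [div_mul_div_comm, div_mul_div_comm, ← add_div, div_lt_iff₀ (by positivity)]
  nlinarith [mul_pos (show (0:ℝ) < 2 - ‖z‖ by linarith)
      (show (0:ℝ) < 2 - ‖w‖ by linarith),
    mul_pos (show (0:ℝ) < 2 - ‖z‖ by linarith) hr,
    mul_pos (show (0:ℝ) < 2 - ‖w‖ by linarith) hs,
    mul_pos hr hs]

lemma gap_lemma {a b : ℝ} (ha1 : -π < a) (ha2 : a ≤ π) (hb1 : -π < b) (hb2 : b ≤ π)
    (h : Real.cos (a - b) < 1/2) : π/3 < |a - b| ∧ |a - b| < 5*π/3 := by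
  have hpi := Real.pi_pos
  constructor
  · by_contra hle
    push_neg at hle
    have : Real.cos (π/3) ≤ Real.cos |a - b| :=
      Real.cos_le_cos_of_nonneg_of_le_pi (abs_nonneg _) (by linarith) hle
    rw [Real.cos_abs, Real.cos_pi_div_three] at this
    linarith
  · by_contra hle
    push_neg at hle
    have habs : |a - b| < 2*π := abs_sub_lt_iff.mpr ⟨by linarith, by linarith⟩
    have hc : Real.cos (2*π - |a - b|) = Real.cos |a - b| := by
      rw [Real.cos_sub, Real.cos_two_pi, Real.sin_two_pi]; ring
    have : Real.cos (π/3) ≤ Real.cos (2*π - |a - b|) :=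
      Real.cos_le_cos_of_nonneg_of_le_pi (by linarith) (by linarith) (by linarith)
    rw [hc, Real.cos_abs, Real.cos_pi_div_three] at this
    linarith

lemma six_points (f : Fin 6 → ℝ)
    (h : ∀ k l : Fin 6, k ≠ l → π/3 < |f k - f l| ∧ |f k - f l| < 5*π/3) : False := by
  have hpi := Real.pi_pos
  set σ := Tuple.sort f with hσ
  set g : Fin 6 → ℝ := f ∘ σ with hg
  have hmono : Monotone g := Tuple.monotone_sort f
  have h' : ∀ k l : Fin 6, k ≠ l → π/3 < |g k - g l| ∧ |g k - g l| < 5*π/3 := by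
    intro k l hkl
    exact h (σ k) (σ l) (fun hh => hkl (σ.injective hh))
  have step : ∀ k l : Fin 6, k < l → π/3 < g l - g k := by
    intro k l hkl
    have hle : g k ≤ g l := hmono hkl.le
    have := (h' l k (by exact fun hh => hkl.ne (hh.symm))).1
    rw [abs_of_nonneg (by linarith)] at this
    linarith
  have h01 := step 0 1 (by decide)
  have h12 := step 1 2 (by decide)
  have h23 := step 2 3 (by decide)
  have h34 := step 3 4 (by decide)
  have h45 := step 4 5 (by decide)
  have h05 := (h' 5 0 (by decide)).2
  rw [abs_of_nonneg (by linarith)] at h05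
  linarith


/-- For any family of pairwise non-overlapping unit disks in the plane
(closed disks of radius 1 whose interiors, i.e. the open unit balls, are pairwise
disjoint), a single unit disk can non-trivially intersect (overlap with positive area,
equivalently have intersecting interiors with) at most 5 of them. -/
theorem unit_disk_overlaps_at_most_five {ι : Type*}
    (p : ι → EuclideanSpace ℝ (Fin 2))
    (hdisj : Pairwise fun i j => Disjoint (Metric.ball (p i) 1) (Metric.ball (p j) 1))
    (c : EuclideanSpace ℝ (Fin 2)) :
    {i | (Metric.ball c 1 ∩ Metric.ball (p i) 1).Nonempty}.Finite ∧
    {i | (Metric.ball c 1 ∩ Metric.ball (p i) 1).Nonempty}.ncard ≤ 5 := by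
  set S := {i | (Metric.ball c 1 ∩ Metric.ball (p i) 1).Nonempty} with hS
  have hlt : ∀ i ∈ S, dist c (p i) < 2 := by
    rintro i ⟨x, hx1, hx2⟩
    rw [Metric.mem_ball] at hx1 hx2
    rw [dist_comm x c] at hx1
    calc dist c (p i) ≤ dist c x + dist x (p i) := dist_triangle _ _ _
    _ < 2 := by linarith
  have hge : ∀ i j, i ≠ j → (2:ℝ) ≤ dist (p i) (p j) := by
    intro i j hij
    by_contra hlt2
    push_neg at hlt2
    have hm1 : midpoint ℝ (p i) (p j) ∈ Metric.ball (p i) 1 := by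
      rw [Metric.mem_ball, dist_midpoint_left (𝕜 := ℝ)]
      rw [Real.norm_two]
      linarith
    have hm2 : midpoint ℝ (p i) (p j) ∈ Metric.ball (p j) 1 := by
      rw [Metric.mem_ball, dist_midpoint_right (𝕜 := ℝ)]
      rw [Real.norm_two]
      linarith
    exact Set.disjoint_left.mp (hdisj hij) hm1 hm2
  by_cases hcen : ∃ i ∈ S, p i = c
  · obtain ⟨i₀, hi₀, hpi₀⟩ := hcen
    have hsub : S ⊆ {i₀} := by
      intro j hj
      by_contra hne
      have h1 := hge i₀ j (fun hh => hne (by simp [hh]))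
      rw [hpi₀] at h1
      exact absurd (hlt j hj) (not_lt.mpr h1)
    refine ⟨Set.Finite.subset (Set.finite_singleton i₀) hsub, ?_⟩
    calc S.ncard ≤ ({i₀} : Set ι).ncard :=
          Set.ncard_le_ncard hsub (Set.finite_singleton i₀)
      _ ≤ 5 := by simp
  · push_neg at hcen
    have key : ∀ t : Finset ι, ↑t ⊆ S → t.card ≤ 5 := by
      intro t ht
      by_contra h6
      push_neg at h6
      obtain ⟨u, hut, hcard⟩ := Finset.exists_subset_card_eq (show 6 ≤ t.card from h6)
      set e : Fin 6 → ι := fun k => ((u.equivFin.symm (Fin.cast hcard.symm k)) : ι)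
        with he
      have hemem : ∀ k, e k ∈ S := fun k =>
        ht (hut (u.equivFin.symm (Fin.cast hcard.symm k)).2)
      have heinj : Function.Injective e := by
        intro k l hkl
        have := Subtype.coe_injective hkl
        have := u.equivFin.symm.injective this
        simpa [Fin.ext_iff] using this
      set F : EuclideanSpace ℝ (Fin 2) ≃ₗᵢ[ℝ] ℂ :=
        Complex.orthonormalBasisOneI.repr.symm with hF
      set z : Fin 6 → ℂ := fun k => F (p (e k)) - F c with hz
      have hnorm : ∀ a b : EuclideanSpace ℝ (Fin 2),
          ‖F a - F b‖ = dist a b := by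
        intro a b
        rw [← LinearIsometryEquiv.map_sub, F.norm_map,
          dist_eq_norm]
      have hz_ne : ∀ k, z k ≠ 0 := by
        intro k hzk
        have : ‖z k‖ = 0 := by rw [hzk]; simp
        rw [hz] at this
        simp only at this
        rw [hnorm] at this
        exact hcen (e k) (hemem k) (by rwa [dist_eq_zero] at this)
      have hz_lt : ∀ k, ‖z k‖ < 2 := by
        intro k
        have := hlt (e k) (hemem k)
        rw [hz]; simp only
        rw [hnorm, dist_comm]
        exact this
      have hz_dist : ∀ k l, k ≠ l → (2:ℝ) ≤ ‖z k - z l‖ := by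
        intro k l hkl
        have h2 := hge (e k) (e l) (fun hh => hkl (heinj hh))
        have : z k - z l = F (p (e k)) - F (p (e l)) := by rw [hz]; ring
        rw [this, hnorm]
        exact h2
      apply six_points (fun k => (z k).arg)
      intro k l hkl
      have hc := key_cos (hz_ne k) (hz_ne l) (hz_lt k) (hz_lt l) (hz_dist k l hkl)
      exact gap_lemma (Complex.neg_pi_lt_arg _) (Complex.arg_le_pi _)
        (Complex.neg_pi_lt_arg _) (Complex.arg_le_pi _) hc
    have hfin : S.Finite := by
      by_contra hinf
      obtain ⟨t, hts, hcard⟩ := Set.Infinite.exists_subset_card_eq hinf 6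
      have := key t hts
      omega
    refine ⟨hfin, ?_⟩
    rw [Set.ncard_eq_toFinset_card S hfin]
    exact key hfin.toFinset (by simp)
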